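/- Let σ : ℝ → ℝ be the SiLU function σ(x) = x/(1+exp(−x)) = x·S(x) with S(x) = 1/(1+exp(−x)). Then σ'(x) = S(x) + x·S(x)·(1−S(x)), and for every x > 0 one has σ'(x)·x/σ(x) = 1 + x·(1−S(x)) ≤ 1 + 1/e. -/

import Mathlib

theorem cond_silu_le_one_add_inv_e (σ S : ℝ → ℝ)
    (hσ : σ = fun x => x / (1 + Real.exp (-x)))
    (hS : S = fun x => 1 / (1 + Real.exp (-x))) :
    (∀ x : ℝ, HasDerivAt σ (S x + x * S x * (1 - S x)) x) ∧
      ∀ x : ℝ, 0 < x →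
        deriv σ x * x / σ x = 1 + x * (1 - S x) ∧
        1 + x * (1 - S x) ≤ 1 + 1 / Real.exp 1 := by
  have hdpos : ∀ x : ℝ, 0 < 1 + Real.exp (-x) := fun x => by positivity
  have hderiv : ∀ x : ℝ, HasDerivAt σ (S x + x * S x * (1 - S x)) x := by
    intro x
    have hd : HasDerivAt (fun y : ℝ => 1 + Real.exp (-y)) (-Real.exp (-x)) x := by
      have h1 : HasDerivAt (fun y : ℝ => Real.exp (-y)) (Real.exp (-x) * (-1)) x :=
        (Real.hasDerivAt_exp (-x)).comp x ((hasDerivAt_id x).neg)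
      simpa using h1.const_add 1
    have h2 : HasDerivAt σ
        ((1 * (1 + Real.exp (-x)) - x * (-Real.exp (-x))) / (1 + Real.exp (-x)) ^ 2) x := by
      rw [hσ]
      exact (hasDerivAt_id x).div hd (ne_of_gt (hdpos x))
    convert h2 using 1
    have hne : (1 + Real.exp (-x)) ≠ 0 := ne_of_gt (hdpos x)
    rw [hS]
    field_simp
    ring_nf
  refine ⟨hderiv, fun x hx => ?_⟩
  have hne : (1 + Real.exp (-x)) ≠ 0 := ne_of_gt (hdpos x)
  constructor
  · rw [(hderiv x).deriv, hσ, hS]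
    have hσne : x / (1 + Real.exp (-x)) ≠ 0 := div_ne_zero (ne_of_gt hx) hne
    field_simp
  · have h1 : 1 - S x = Real.exp (-x) / (1 + Real.exp (-x)) := by
      rw [hS]; field_simp; ring
    have h2 : x * (1 - S x) ≤ x * Real.exp (-x) := by
      rw [h1, div_eq_mul_inv, ← mul_assoc]
      have : (1 + Real.exp (-x))⁻¹ ≤ 1 := by
        rw [inv_le_one_iff₀]
        right
        nlinarith [Real.exp_pos (-x)]
      exact mul_le_of_le_one_right (by positivity) this
    have h3 : x * Real.exp (-x) ≤ 1 / Real.exp 1 := by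
      rw [div_eq_mul_inv, one_mul, ← Real.exp_neg]
      have := Real.add_one_le_exp (x - 1)
      have hx2 : x ≤ Real.exp (x - 1) := by linarith
      calc x * Real.exp (-x) ≤ Real.exp (x - 1) * Real.exp (-x) := by
            nlinarith [Real.exp_pos (-x)]
        _ = Real.exp (-1) := by rw [← Real.exp_add]; ring_nf
    linarith
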